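/- Let f_1, …, f_n : ℝ^d → ℝ each be differentiable, convex and L-smooth, and let x* ∈ ℝ^d satisfy Σ_{i=1}^n ∇f_i(x*) = 0. Then for any points x_1, …, x_n ∈ ℝ^d, with x̄ := (1/n)·Σᵢ x_i: ‖(1/n)·Σ_{i=1}^n ∇f_i(x_i)‖² ≤ (2L²/n)·Σ_{i=1}^n ‖x̄ − x_i‖² + (4L/n)·Σ_{i=1}^n ( f_i(x̄) − f_i(x*) ). -/

import Mathlib

open Finset Set InnerProductSpace

variable {E : Type*} [NormedAddCommGroup E] [InnerProductSpace ℝ E] [CompleteSpace E]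

lemma my_line_deriv (f : E → ℝ) (g : E → E) (hf : ∀ z, HasGradientAt f (g z) z)
    (x v : E) (t : ℝ) :
    HasDerivAt (fun s : ℝ => f (x + s • v)) ⟪g (x + t • v), v⟫_ℝ t := by
  have hline : HasDerivAt (fun s : ℝ => x + s • v) v t := by
    simpa using ((hasDerivAt_id t).smul_const v).const_add x
  have := ((hf (x + t • v)).hasFDerivAt).comp_hasDerivAt t hline
  simp only [InnerProductSpace.toDual_apply_apply] at this
  exact this

lemma my_inner_grad (c : E) (z : E) : HasGradientAt (fun w => ⟪c, w⟫_ℝ) c z := by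
  have h1 : HasFDerivAt (fun w => ⟪c, w⟫_ℝ) (innerSL ℝ c) z := by
    simpa using (innerSL ℝ c).hasFDerivAt (x := z)
  rw [hasFDerivAt_iff_hasGradientAt] at h1
  have h2 : toDual ℝ E c = innerSL ℝ c := by
    ext w; simp [InnerProductSpace.toDual_apply_apply]
  rwa [← h2, LinearIsometryEquiv.symm_apply_apply] at h1

lemma my_first_order (f : E → ℝ) (g : E → E) (hconv : ConvexOn ℝ Set.univ f)
    (hf : ∀ z, HasGradientAt f (g z) z) (x y : E) :
    ⟪g x, y - x⟫_ℝ ≤ f y - f x := by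
  set v := y - x with hv
  have hφconv : ConvexOn ℝ Set.univ (fun t : ℝ => f (x + t • v)) := by
    refine ⟨convex_univ, fun t1 _ t2 _ a b ha hb hab => ?_⟩
    have key : a • (x + t1 • v) + b • (x + t2 • v) = x + (a • t1 + b • t2) • v := by
      have hx : a • x + b • x = x := by rw [← add_smul, hab, one_smul]
      calc a • (x + t1 • v) + b • (x + t2 • v)
          = (a • x + b • x) + ((a * t1) • v + (b * t2) • v) := by
            rw [smul_add, smul_add, smul_smul, smul_smul]; abel
        _ = x + (a • t1 + b • t2) • v := by
            rw [hx, smul_eq_mul, smul_eq_mul, add_smul]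
    have := hconv.2 (mem_univ (x + t1 • v)) (mem_univ (x + t2 • v)) ha hb hab
    rwa [key] at this
  have hd : HasDerivAt (fun t : ℝ => f (x + t • v)) ⟪g x, v⟫_ℝ (0 : ℝ) := by
    have := my_line_deriv f g hf x v 0
    simpa using this
  have hs := hφconv.le_slope_of_hasDerivAt (mem_univ (0 : ℝ)) (mem_univ (1 : ℝ)) one_pos hd
  simpa [slope_def_field, hv] using hs

lemma my_descent (f : E → ℝ) (g : E → E) (L : ℝ)
    (hf : ∀ z, HasGradientAt f (g z) z)
    (hlip : ∀ z w, ‖g z - g w‖ ≤ L * ‖z - w‖) (x y : E) :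
    f y ≤ f x + ⟪g x, y - x⟫_ℝ + L / 2 * ‖y - x‖ ^ 2 := by
  set v := y - x with hv
  set ψ : ℝ → ℝ := fun t => f (x + t • v) - t * ⟪g x, v⟫_ℝ - L * t ^ 2 / 2 * ‖v‖ ^ 2 with hψ
  have hψd : ∀ t : ℝ, HasDerivAt ψ
      (⟪g (x + t • v), v⟫_ℝ - ⟪g x, v⟫_ℝ - L * t * ‖v‖ ^ 2) t := by
    intro t
    have h1 := my_line_deriv f g hf x v t
    have h2 : HasDerivAt (fun t : ℝ => t * ⟪g x, v⟫_ℝ) ⟪g x, v⟫_ℝ t := by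
      simpa using (hasDerivAt_id t).mul_const ⟪g x, v⟫_ℝ
    have h3 : HasDerivAt (fun t : ℝ => L * t ^ 2 / 2 * ‖v‖ ^ 2) (L * t * ‖v‖ ^ 2) t := by
      have := (((hasDerivAt_pow 2 t).const_mul L).div_const 2).mul_const (‖v‖ ^ 2)
      exact this.congr_deriv (by push_cast; ring)
    exact (h1.sub h2).sub h3
  have hmono : AntitoneOn ψ (Set.Icc 0 1) := by
    apply antitoneOn_of_deriv_nonpos (convex_Icc 0 1)
    · exact fun t _ => (hψd t).continuousAt.continuousWithinAt
    · exact fun t _ => (hψd t).differentiableAt.differentiableWithinAt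
    · intro t ht
      rw [interior_Icc] at ht
      rw [(hψd t).deriv]
      have hinner : ⟪g (x + t • v) - g x, v⟫_ℝ ≤ ‖g (x + t • v) - g x‖ * ‖v‖ :=
        real_inner_le_norm _ _
    -- ‖g (x+t•v) - g x‖ ≤ L * ‖t•v‖ = L * t * ‖v‖
      have hl := hlip (x + t • v) x
      rw [add_sub_cancel_left, norm_smul, Real.norm_eq_abs, abs_of_pos ht.1] at hl
      rw [inner_sub_left] at hinner
      have hnv : (0:ℝ) ≤ ‖v‖ := norm_nonneg v
      nlinarith [mul_le_mul_of_nonneg_right hl hnv]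
  have h01 := hmono (Set.left_mem_Icc.2 zero_le_one) (Set.right_mem_Icc.2 zero_le_one) zero_le_one
  have e1 : ψ 1 = f y - ⟪g x, v⟫_ℝ - L / 2 * ‖v‖ ^ 2 := by
    simp [hψ, hv]
  have e0 : ψ 0 = f x := by simp [hψ]
  rw [e1, e0] at h01
  linarith

lemma my_cocoercive (f : E → ℝ) (g : E → E) (L : ℝ)
    (hconv : ConvexOn ℝ Set.univ f)
    (hf : ∀ z, HasGradientAt f (g z) z) (hL : 0 ≤ L)
    (hlip : ∀ z w, ‖g z - g w‖ ≤ L * ‖z - w‖) (x y : E) :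
    ‖g x - g y‖ ^ 2 ≤ 2 * L * (f x - f y - ⟪g y, x - y⟫_ℝ) := by
  rcases eq_or_lt_of_le hL with hL0 | hLpos
  · have h0 : ‖g x - g y‖ ≤ 0 := by simpa [← hL0] using hlip x y
    have hgg : g x - g y = 0 := norm_le_zero_iff.1 h0
    rw [hgg]
    simp [← hL0]
  · set f2 : E → ℝ := fun z => f z - ⟪g y, z⟫_ℝ with hf2def
    set g2 : E → E := fun z => g z - g y with hg2def
    have hf2 : ∀ z, HasGradientAt f2 (g2 z) z := by
      intro z
      refine hasGradientAt_iff_hasFDerivAt.2 ?_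
      simp only [hg2def]
      rw [map_sub]
      exact ((hf z).hasFDerivAt).sub ((my_inner_grad (g y) z).hasFDerivAt)
    have hconv2 : ConvexOn ℝ Set.univ f2 := by
      have hlin : ConvexOn ℝ Set.univ (fun z : E => ⟪-(g y), z⟫_ℝ) := by
        refine ⟨convex_univ, fun a _ b _ s t hs ht hst => ?_⟩
        show ⟪-g y, s • a + t • b⟫_ℝ ≤ s • ⟪-g y, a⟫_ℝ + t • ⟪-g y, b⟫_ℝ
        rw [inner_add_right, real_inner_smul_right, real_inner_smul_right,
          smul_eq_mul, smul_eq_mul]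
      have := hconv.add hlin
      have hfeq : f2 = f + fun z : E => ⟪-(g y), z⟫_ℝ := by
        funext z
        simp [hf2def, inner_neg_left, sub_eq_add_neg]
      rw [hfeq]; exact this
    have hlip2 : ∀ z w, ‖g2 z - g2 w‖ ≤ L * ‖z - w‖ := by
      intro z w; simpa [hg2def, sub_sub_sub_cancel_right] using hlip z w
    have hmin : ∀ z, f2 y ≤ f2 z := by
      intro z
      have := my_first_order f2 g2 hconv2 hf2 y z
      have hz : g2 y = 0 := by simp [hg2def]
      rw [hz] at this
      simp at this
      linarith
    set z0 : E := x - L⁻¹ • g2 x with hz0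
    have hdes := my_descent f2 g2 L hf2 hlip2 x z0
    have hz0x : z0 - x = -(L⁻¹ • g2 x) := by rw [hz0]; abel
    have hi : ⟪g2 x, z0 - x⟫_ℝ = -(L⁻¹ * ‖g2 x‖ ^ 2) := by
      rw [hz0x, inner_neg_right, real_inner_smul_right, real_inner_self_eq_norm_sq]
    have hn : ‖z0 - x‖ ^ 2 = L⁻¹ ^ 2 * ‖g2 x‖ ^ 2 := by
      rw [hz0x, norm_neg, norm_smul, Real.norm_eq_abs, abs_of_pos (inv_pos.2 hLpos), mul_pow]
    rw [hi, hn] at hdes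
    have hkey : f2 y ≤ f2 x - 1 / (2 * L) * ‖g2 x‖ ^ 2 := by
      have h2 := (hmin z0).trans hdes
      have hL' : L ≠ 0 := ne_of_gt hLpos
      have heq : f2 x + -(L⁻¹ * ‖g2 x‖ ^ 2) + L / 2 * (L⁻¹ ^ 2 * ‖g2 x‖ ^ 2)
          = f2 x - 1 / (2 * L) * ‖g2 x‖ ^ 2 := by
        field_simp
        ring
      rw [heq] at h2
      exact h2
    have hf2diff : f2 x - f2 y = f x - f y - ⟪g y, x - y⟫_ℝ := by
      simp [hf2def, inner_sub_right]
      ring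
    have : ‖g2 x‖ ^ 2 ≤ 2 * L * (f2 x - f2 y) := by
      have h1 : 1 / (2 * L) * ‖g2 x‖ ^ 2 ≤ f2 x - f2 y := by linarith
      calc ‖g2 x‖ ^ 2 = 2 * L * (1 / (2 * L) * ‖g2 x‖ ^ 2) := by
            field_simp
        _ ≤ 2 * L * (f2 x - f2 y) := by
            apply mul_le_mul_of_nonneg_left h1 (by linarith)
    rwa [hf2diff] at this

lemma my_jensen {n : ℕ} (hn : 0 < n) (v : Fin n → E) :
    ‖(n : ℝ)⁻¹ • ∑ i, v i‖ ^ 2 ≤ (n : ℝ)⁻¹ * ∑ i, ‖v i‖ ^ 2 := by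
  have hn' : (0:ℝ) < n := by exact_mod_cast hn
  have h1 : ‖(n : ℝ)⁻¹ • ∑ i, v i‖ ≤ (n : ℝ)⁻¹ * ∑ i, ‖v i‖ := by
    rw [norm_smul, Real.norm_eq_abs, abs_of_pos (inv_pos.2 hn')]
    exact mul_le_mul_of_nonneg_left (norm_sum_le _ _) (le_of_lt (inv_pos.2 hn'))
  have h2 : (∑ i, ‖v i‖) ^ 2 ≤ (n:ℝ) * ∑ i, ‖v i‖ ^ 2 := by
    have := sq_sum_le_card_mul_sum_sq (s := (univ : Finset (Fin n))) (f := fun i => ‖v i‖)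
    simpa using this
  calc ‖(n : ℝ)⁻¹ • ∑ i, v i‖ ^ 2 ≤ ((n : ℝ)⁻¹ * ∑ i, ‖v i‖) ^ 2 :=
        pow_le_pow_left₀ (norm_nonneg _) h1 2
    _ = (n : ℝ)⁻¹ ^ 2 * (∑ i, ‖v i‖) ^ 2 := by ring
    _ ≤ (n : ℝ)⁻¹ ^ 2 * ((n:ℝ) * ∑ i, ‖v i‖ ^ 2) := by
        apply mul_le_mul_of_nonneg_left h2 (by positivity)
    _ = (n : ℝ)⁻¹ * ∑ i, ‖v i‖ ^ 2 := by
        field_simp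

theorem sq_norm_avg_grad_le {d n : ℕ} (hn : 0 < n) (L : ℝ)
    (f : Fin n → EuclideanSpace ℝ (Fin d) → ℝ)
    (hdiff : ∀ i, Differentiable ℝ (f i))
    (hconv : ∀ i, ConvexOn ℝ Set.univ (f i))
    (hsmooth : ∀ i, ∀ x y : EuclideanSpace ℝ (Fin d),
      ‖gradient (f i) x - gradient (f i) y‖ ≤ L * ‖x - y‖)
    (xstar : EuclideanSpace ℝ (Fin d))
    (hstar : ∑ i, gradient (f i) xstar = 0)
    (x : Fin n → EuclideanSpace ℝ (Fin d)) :
    ‖(n : ℝ)⁻¹ • ∑ i, gradient (f i) (x i)‖ ^ 2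
      ≤ (2 * L ^ 2 / n) * ∑ i, ‖(n : ℝ)⁻¹ • (∑ j, x j) - x i‖ ^ 2
        + (4 * L / n) * ∑ i, (f i ((n : ℝ)⁻¹ • ∑ j, x j) - f i xstar) := by
  rcases Nat.eq_zero_or_pos d with hd | hd
  · subst hd
    have hz : ∀ v : EuclideanSpace ℝ (Fin 0), v = 0 := fun v => Subsingleton.elim v 0
    simp [hz]
  -- now d > 0, get L ≥ 0
  have hgrad : ∀ i z, HasGradientAt (f i) (gradient (f i) z) z :=
    fun i z => (hdiff i z).hasGradientAt
  have hL : 0 ≤ L := by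
    have he : ‖(EuclideanSpace.single (⟨0, hd⟩ : Fin d) (1:ℝ)) - 0‖ = 1 := by
      simp [EuclideanSpace.norm_single]
    have h := hsmooth ⟨0, hn⟩ (EuclideanSpace.single (⟨0, hd⟩ : Fin d) (1:ℝ)) 0
    rw [he, mul_one] at h
    exact le_trans (norm_nonneg _) h
  have hn' : (0:ℝ) < n := by exact_mod_cast hn
  set xb : EuclideanSpace ℝ (Fin d) := (n : ℝ)⁻¹ • (∑ j, x j) with hxb
  set A : EuclideanSpace ℝ (Fin d) :=
    (n : ℝ)⁻¹ • ∑ i, (gradient (f i) (x i) - gradient (f i) xb) with hA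
  set B : EuclideanSpace ℝ (Fin d) :=
    (n : ℝ)⁻¹ • ∑ i, (gradient (f i) xb - gradient (f i) xstar) with hB
  have hsplit : (n : ℝ)⁻¹ • ∑ i, gradient (f i) (x i) = A + B := by
    rw [hA, hB, ← smul_add, ← Finset.sum_add_distrib]
    congr 1
    have : ∀ i : Fin n, (gradient (f i) (x i) - gradient (f i) xb)
        + (gradient (f i) xb - gradient (f i) xstar)
        = gradient (f i) (x i) - gradient (f i) xstar := fun i => by abel
    rw [Finset.sum_congr rfl (fun i _ => this i), Finset.sum_sub_distrib, hstar, sub_zero]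
  have htri : ‖A + B‖ ^ 2 ≤ 2 * ‖A‖ ^ 2 + 2 * ‖B‖ ^ 2 := by
    nlinarith [norm_add_le A B, norm_nonneg A, norm_nonneg B, norm_nonneg (A + B),
      sq_nonneg (‖A‖ - ‖B‖)]
  -- bound ‖A‖²
  have hAb : ‖A‖ ^ 2 ≤ (n : ℝ)⁻¹ * ∑ i, L ^ 2 * ‖xb - x i‖ ^ 2 := by
    refine le_trans (my_jensen hn _) ?_
    apply mul_le_mul_of_nonneg_left _ (le_of_lt (inv_pos.2 hn'))
    apply Finset.sum_le_sum
    intro i _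
    have h := hsmooth i (x i) xb
    rw [norm_sub_rev (x i) xb] at h
    calc ‖gradient (f i) (x i) - gradient (f i) xb‖ ^ 2 ≤ (L * ‖xb - x i‖) ^ 2 := by
          apply pow_le_pow_left₀ (norm_nonneg _) h
      _ = L ^ 2 * ‖xb - x i‖ ^ 2 := by ring
  -- bound ‖B‖²
  have hBb : ‖B‖ ^ 2 ≤ (n : ℝ)⁻¹ * (2 * L * ∑ i, (f i xb - f i xstar)) := by
    refine le_trans (my_jensen hn _) ?_
    apply mul_le_mul_of_nonneg_left _ (le_of_lt (inv_pos.2 hn'))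
    have hstep : ∀ i : Fin n, ‖gradient (f i) xb - gradient (f i) xstar‖ ^ 2
        ≤ 2 * L * (f i xb - f i xstar - ⟪gradient (f i) xstar, xb - xstar⟫_ℝ) :=
      fun i => my_cocoercive (f i) (gradient (f i)) L (hconv i) (hgrad i) hL (hsmooth i) xb xstar
    refine le_trans (Finset.sum_le_sum (fun i _ => hstep i)) (le_of_eq ?_)
    have hinner0 : ∑ i, ⟪gradient (f i) xstar, xb - xstar⟫_ℝ = 0 := by
      rw [← sum_inner, hstar, inner_zero_left]
    calc ∑ i, 2 * L * (f i xb - f i xstar - ⟪gradient (f i) xstar, xb - xstar⟫_ℝ)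
        = ∑ i, (2 * L * (f i xb - f i xstar)
            - 2 * L * ⟪gradient (f i) xstar, xb - xstar⟫_ℝ) := by
          apply Finset.sum_congr rfl; intro i _; ring
      _ = (∑ i, 2 * L * (f i xb - f i xstar))
            - 2 * L * ∑ i, ⟪gradient (f i) xstar, xb - xstar⟫_ℝ := by
          rw [Finset.sum_sub_distrib, Finset.mul_sum]
      _ = 2 * L * ∑ i, (f i xb - f i xstar) := by
          rw [hinner0, Finset.mul_sum]; ring
  rw [hsplit]
  refine le_trans htri ?_
  have hfinal : 2 * ((n:ℝ)⁻¹ * ∑ i, L ^ 2 * ‖xb - x i‖ ^ 2)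
      + 2 * ((n:ℝ)⁻¹ * (2 * L * ∑ i, (f i xb - f i xstar)))
      = (2 * L ^ 2 / n) * ∑ i, ‖xb - x i‖ ^ 2 + (4 * L / n) * ∑ i, (f i xb - f i xstar) := by
    rw [← Finset.mul_sum]
    field_simp
    ring
  calc 2 * ‖A‖ ^ 2 + 2 * ‖B‖ ^ 2
      ≤ 2 * ((n:ℝ)⁻¹ * ∑ i, L ^ 2 * ‖xb - x i‖ ^ 2)
        + 2 * ((n:ℝ)⁻¹ * (2 * L * ∑ i, (f i xb - f i xstar))) := by
        exact add_le_add (mul_le_mul_of_nonneg_left hAb (by norm_num))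
          (mul_le_mul_of_nonneg_left hBb (by norm_num))
    _ = _ := hfinal
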